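/- Let g be any finite-dimensional real semisimple Lie algebra and set d = dim g. Then the direct product Lie algebra g ⊕ ℝ^d carries a nondegenerate symmetric bilinear form B of split signature (d,d) such that its Lie bracket is in the null cone of the O(B)-action. -/

import Mathlib

/-- The isometry group `O(B)` of a bilinear form `B`. -/
def IsometryGrp {V : Type*} [AddCommGroup V] [Module ℝ V]
    (B : LinearMap.BilinForm ℝ V) : Set (V ≃ₗ[ℝ] V) :=
  {A | ∀ x y, B (A x) (A y) = B x y}

/-- `μ` is in the null cone of the `O(B)`-action: `0` lies in the closure of the orbit
`O(B)·μ`, `(A·μ)(x,y) = A⁻¹(μ(Ax,Ay))`, in the topology of pointwise convergence. -/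
def InNullCone {V : Type*} [AddCommGroup V] [Module ℝ V] [TopologicalSpace V]
    (B : LinearMap.BilinForm ℝ V) (μ : V → V → V) : Prop :=
  (0 : V → V → V) ∈
    closure {f : V → V → V | ∃ A ∈ IsometryGrp B, f = fun x y => A.symm (μ (A x) (A y))}

/-- `B` has signature `(p,q)`: it is represented in some basis by the diagonal matrix with
`p` entries `+1` and `q` entries `-1`. -/
def HasSignature {V : Type*} [AddCommGroup V] [Module ℝ V]
    (B : LinearMap.BilinForm ℝ V) (p q : ℕ) : Prop :=
  ∃ b : Module.Basis (Fin p ⊕ Fin q) ℝ V, ∀ i j, B (b i) (b j) =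
    if i = j then Sum.elim (fun _ => (1 : ℝ)) (fun _ => (-1 : ℝ)) i else 0

/-- For every finite-dimensional real semisimple Lie algebra `g` with `d = dim g`, the
direct product Lie algebra `g ⊕ ℝ^d` (with `ℝ^d` abelian, bracket
`((x,u),(y,v)) ↦ (⁅x,y⁆, 0)`) carries a nondegenerate symmetric bilinear form of split
signature `(d,d)` whose Lie bracket is in the null cone of the `O(B)`-action. -/
theorem semisimple_sum_full_abelian_in_null_cone
    (g : Type) [LieRing g] [LieAlgebra ℝ g] [FiniteDimensional ℝ g]
    [TopologicalSpace g] [IsTopologicalAddGroup g] [ContinuousSMul ℝ g] [T2Space g]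
    [LieAlgebra.IsSemisimple ℝ g]
    (d : ℕ) (hd : d = Module.finrank ℝ g) :
    ∃ B : LinearMap.BilinForm ℝ (g × (Fin d → ℝ)),
      HasSignature B d d ∧ InNullCone B (fun a b => (⁅a.1, b.1⁆, 0)) := by
  classical
  subst hd
  set d := Module.finrank ℝ g with hd
  let b : Module.Basis (Fin d) ℝ g := Module.finBasis ℝ g
  let E : g ≃ₗ[ℝ] (Fin d → ℝ) := b.equivFun
  let B : LinearMap.BilinForm ℝ (g × (Fin d → ℝ)) :=
    LinearMap.mk₂ ℝ
      (fun v w => (∑ i, E v.1 i * w.2 i + ∑ i, E w.1 i * v.2 i) / 2)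
      (by intro m₁ m₂ n; simp [map_add, Finset.sum_add_distrib, add_mul, mul_add]; ring)
      (by intro c m n
          simp [map_smul, smul_eq_mul, mul_assoc, mul_left_comm, ← Finset.mul_sum]; ring)
      (by intro m n₁ n₂; simp [map_add, Finset.sum_add_distrib, add_mul, mul_add]; ring)
      (by intro c m n
          simp [map_smul, smul_eq_mul, mul_assoc, mul_left_comm, ← Finset.mul_sum]; ring)
  have hB : ∀ x u y v, B (x, u) (y, v) = (∑ i, E x i * v i + ∑ i, E y i * u i) / 2 :=
    fun _ _ _ _ => rfl
  refine ⟨B, ?_, ?_⟩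
  · -- signature (d, d)
    let F : ((Fin d → ℝ) × (Fin d → ℝ)) →ₗ[ℝ] ((Fin d → ℝ) × (Fin d → ℝ)) :=
      (LinearMap.fst ℝ _ _ + LinearMap.snd ℝ _ _).prod
        (LinearMap.fst ℝ _ _ - LinearMap.snd ℝ _ _)
    let H : ((Fin d → ℝ) × (Fin d → ℝ)) ≃ₗ[ℝ] ((Fin d → ℝ) × (Fin d → ℝ)) :=
      LinearEquiv.ofLinear F ((1/2 : ℝ) • F)
        (by apply LinearMap.ext; rintro ⟨a, c⟩
            simp [F]
            constructor <;> module)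
        (by apply LinearMap.ext; rintro ⟨a, c⟩
            simp [F]
            constructor <;> module)
    let L : ((Fin d ⊕ Fin d) → ℝ) ≃ₗ[ℝ] (g × (Fin d → ℝ)) :=
      (LinearEquiv.sumArrowLequivProdArrow (Fin d) (Fin d) ℝ ℝ).trans
        (H.trans (E.symm.prodCongr (LinearEquiv.refl ℝ _)))
    let c : Module.Basis (Fin d ⊕ Fin d) ℝ (g × (Fin d → ℝ)) := (Pi.basisFun ℝ _).map L
    have keyl : ∀ i : Fin d, (LinearEquiv.sumArrowLequivProdArrow (Fin d) (Fin d) ℝ ℝ)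
        (Pi.single (Sum.inl i) 1) = (Pi.single i 1, 0) := by
      intro i
      refine Prod.ext ?_ ?_ <;> funext j <;>
        simp [LinearEquiv.sumArrowLequivProdArrow_apply_fst,
          LinearEquiv.sumArrowLequivProdArrow_apply_snd, Pi.single_apply]
    have keyr : ∀ i : Fin d, (LinearEquiv.sumArrowLequivProdArrow (Fin d) (Fin d) ℝ ℝ)
        (Pi.single (Sum.inr i) 1) = (0, Pi.single i 1) := by
      intro i
      refine Prod.ext ?_ ?_ <;> funext j <;>
        simp [LinearEquiv.sumArrowLequivProdArrow_apply_fst,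
          LinearEquiv.sumArrowLequivProdArrow_apply_snd, Pi.single_apply]
    have h1 : ∀ i, c (Sum.inl i) = (E.symm (Pi.single i 1), Pi.single i 1) := by
      intro i
      simp [c, L, H, F, Module.Basis.map_apply, keyl]
    have h2 : ∀ i, c (Sum.inr i) = (E.symm (Pi.single i 1), -Pi.single i 1) := by
      intro i
      simp [c, L, H, F, Module.Basis.map_apply, keyr]
    have hsum : ∀ i j : Fin d,
        ∑ k, Pi.single (M := fun _ : Fin d => ℝ) i 1 k * Pi.single (M := fun _ : Fin d => ℝ) j 1 k
          = if i = j then (1:ℝ) else 0 := by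
      intro i j
      rcases eq_or_ne i j with hij | hij
      · subst hij; simp [Pi.single_apply]
      · simp [Pi.single_apply, hij, hij.symm]
    refine ⟨c, ?_⟩
    rintro (i | i) (j | j) <;>
      simp only [h1, h2, hB, LinearEquiv.apply_symm_apply, Pi.neg_apply, mul_neg, neg_mul,
        Finset.sum_neg_distrib, hsum, Sum.elim_inl, Sum.elim_inr, Sum.inl.injEq,
        Sum.inr.injEq, reduceCtorEq, if_false, neg_neg] <;>
      all_goals
        rcases eq_or_ne i j with rfl | hij
        · norm_num
        · simp [hij, hij.symm]
  · -- null cone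
    have hmem : ∀ n : ℕ,
        (fun a b : g × (Fin d → ℝ) => (((n:ℝ)+1)⁻¹ • ⁅a.1, b.1⁆, (0 : Fin d → ℝ))) ∈
          {f : (g × (Fin d → ℝ)) → (g × (Fin d → ℝ)) → (g × (Fin d → ℝ)) |
            ∃ A ∈ IsometryGrp B, f = fun x y => A.symm
              ((fun a b : g × (Fin d → ℝ) => (⁅a.1, b.1⁆, (0 : Fin d → ℝ))) (A x) (A y))} := by
      intro n
      set s : ℝ := ((n:ℝ)+1)⁻¹ with hs
      have hsne : s ≠ 0 := by positivity
      have hsin : s⁻¹ ≠ 0 := inv_ne_zero hsne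
      let A : (g × (Fin d → ℝ)) ≃ₗ[ℝ] (g × (Fin d → ℝ)) :=
        (LinearEquiv.smulOfNeZero ℝ g s hsne).prodCongr
          (LinearEquiv.smulOfNeZero ℝ (Fin d → ℝ) s⁻¹ hsin)
      have hA : ∀ v : g × (Fin d → ℝ), A v = (s • v.1, s⁻¹ • v.2) := fun _ => rfl
      refine ⟨A, ?_, ?_⟩
      · intro v w
        rw [hA, hA, hB, hB]
        have key : ∀ (x : g) (u : Fin d → ℝ), ∑ i, E (s • x) i * (s⁻¹ • u) i
            = ∑ i, E x i * u i := by
          intro x u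
          refine Finset.sum_congr rfl fun i _ => ?_
          simp [map_smul, smul_eq_mul]
          field_simp
        rw [key, key]
      · funext x y
        rw [LinearEquiv.eq_symm_apply, hA, hA, hA]
        refine Prod.ext ?_ ?_
        · show s • (s • ⁅x.1, y.1⁆) = ⁅s • x.1, s • y.1⁆
          simp [smul_smul, lie_smul, smul_lie]
        · show s⁻¹ • (0 : Fin d → ℝ) = 0
          simp
    have htend : Filter.Tendsto
        (fun n : ℕ => fun a b : g × (Fin d → ℝ) => (((n:ℝ)+1)⁻¹ • ⁅a.1, b.1⁆, (0 : Fin d → ℝ)))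
        Filter.atTop (nhds 0) := by
      rw [tendsto_pi_nhds]
      intro a
      rw [tendsto_pi_nhds]
      intro c
      have h0 : (0 : (g × (Fin d → ℝ)) → (g × (Fin d → ℝ)) → (g × (Fin d → ℝ))) a c
          = ((0 : g), (0 : Fin d → ℝ)) := rfl
      rw [h0]
      refine Filter.Tendsto.prodMk_nhds ?_ tendsto_const_nhds
      have := (tendsto_one_div_add_atTop_nhds_zero_nat (𝕜 := ℝ)).smul_const (⁅a.1, c.1⁆ : g)
      simpa [one_div, zero_smul] using this
    exact mem_closure_of_tendsto htend (Filter.Eventually.of_forall hmem)
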